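/- Fix N users each with m feature vectors z_{u,1},…,z_{u,m} ∈ ℝ^d satisfying ‖z_{u,i}‖₂ ≤ B and the average correlation condition (1/(m(m−1))) Σ_{i≠j} z_{u,i}ᵀ z_{u,j} ≤ ρB² for some ρ ∈ [0,1]. Let σ_u be i.i.d. Rademacher variables, one per user, and Z̄_u = Σ_{i=1}^m z_{u,i}. Then E_σ[‖Σ_u σ_u Z̄_u‖₂] ≤ √(NmB²(1+(m−1)ρ)), and hence the block-dependent Rademacher complexity (WB/(mN))·E_σ[‖Σ_u σ_u Z̄_u‖₂] is at most (WB/√(mN))·√(1+(m−1)ρ). -/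

import Mathlib

open Finset

noncomputable def rsg (b : Bool) : ℝ := if b then 1 else -1

lemma rsg_mul_self (b : Bool) : rsg b * rsg b = 1 := by cases b <;> simp [rsg]

lemma rsg_ortho (N : ℕ) (u v : Fin N) :
    ∑ ε : Fin N → Bool, rsg (ε u) * rsg (ε v) = if u = v then (2:ℝ)^N else 0 := by
  by_cases h : u = v
  · subst h
    simp only [rsg_mul_self, Finset.sum_const, Finset.card_univ, if_pos rfl]
    simp [Fintype.card_fun]
  · rw [if_neg h]
    have hvu : v ≠ u := fun hh => h hh.symm
    have := Equiv.sum_comp (Equiv.funSplitAt u Bool).symm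
      (fun ε : Fin N → Bool => rsg (ε u) * rsg (ε v))
    rw [← this]
    have hcalc : ∀ p : Bool × ({ j : Fin N // j ≠ u } → Bool),
        rsg ((Equiv.funSplitAt u Bool).symm p u) * rsg ((Equiv.funSplitAt u Bool).symm p v)
          = rsg p.1 * rsg (p.2 ⟨v, hvu⟩) := by
      intro p
      simp [Equiv.funSplitAt, Equiv.piSplitAt, hvu]
    rw [Finset.sum_congr rfl (fun p _ => hcalc p)]
    rw [Fintype.sum_prod_type]
    have : ∀ x : Bool, ∑ y : { j : Fin N // j ≠ u } → Bool, rsg x * rsg (y ⟨v, hvu⟩)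
        = rsg x * ∑ y : { j : Fin N // j ≠ u } → Bool, rsg (y ⟨v, hvu⟩) := fun x => by
      rw [Finset.mul_sum]
    rw [Finset.sum_congr rfl (fun x _ => this x), ← Finset.sum_mul]
    simp [rsg]

lemma rsg_exp_sq {d N : ℕ} (Z : Fin N → EuclideanSpace ℝ (Fin d)) :
    ∑ ε : Fin N → Bool, ‖∑ u : Fin N, rsg (ε u) • Z u‖ ^ 2
      = (2:ℝ)^N * ∑ u : Fin N, ‖Z u‖ ^ 2 := by
  have expand : ∀ ε : Fin N → Bool, ‖∑ u : Fin N, rsg (ε u) • Z u‖ ^ 2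
      = ∑ u : Fin N, ∑ v : Fin N, rsg (ε u) * rsg (ε v) * (inner ℝ (Z u) (Z v) : ℝ) := by
    intro ε
    rw [← real_inner_self_eq_norm_sq, sum_inner]
    refine Finset.sum_congr rfl fun u _ => ?_
    rw [real_inner_smul_left, inner_sum, Finset.mul_sum]
    refine Finset.sum_congr rfl fun v _ => ?_
    rw [real_inner_smul_right]
    ring
  calc ∑ ε : Fin N → Bool, ‖∑ u : Fin N, rsg (ε u) • Z u‖ ^ 2
      = ∑ u : Fin N, ∑ v : Fin N,
          (∑ ε : Fin N → Bool, rsg (ε u) * rsg (ε v)) * (inner ℝ (Z u) (Z v) : ℝ) := by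
        simp_rw [expand]
        rw [Finset.sum_comm]
        refine Finset.sum_congr rfl fun u _ => ?_
        rw [Finset.sum_comm]
        refine Finset.sum_congr rfl fun v _ => ?_
        rw [Finset.sum_mul]
    _ = (2:ℝ)^N * ∑ u : Fin N, ‖Z u‖ ^ 2 := by
        simp_rw [rsg_ortho, ite_mul, zero_mul]
        rw [Finset.mul_sum]
        refine Finset.sum_congr rfl fun u _ => ?_
        rw [Finset.sum_ite_eq univ u (fun v => (2:ℝ)^N * (inner ℝ (Z u) (Z v) : ℝ))]
        rw [if_pos (Finset.mem_univ u), real_inner_self_eq_norm_sq]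


/-- Block-dependent Rademacher bound: with one Rademacher sign per user and
block vectors of norm at most `B` whose average pairwise inner product within each block
is at most `ρB²`, we have `E_σ ‖Σ_u σ_u Z̄_u‖ ≤ √(NmB²(1+(m-1)ρ))`, and hence the
block-dependent Rademacher complexity `(WB/(mN)) E_σ ‖Σ_u σ_u Z̄_u‖` (with the `W`-scaled
supremum) is at most `(WB/√(mN))·√(1+(m-1)ρ)`. -/
theorem block_dependent_rademacher_bound
    (N m d : ℕ) (B W ρ : ℝ) (hW : 0 < W) (hρ0 : 0 ≤ ρ) (hρ1 : ρ ≤ 1)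
    (z : Fin N → Fin m → EuclideanSpace ℝ (Fin d))
    (hz : ∀ u i, ‖z u i‖ ≤ B)
    (hcorr : ∀ u, (1 / ((m : ℝ) * ((m : ℝ) - 1))) *
        ∑ i : Fin m, ∑ j ∈ Finset.univ.filter (fun j => j ≠ i),
          inner ℝ (z u i) (z u j) ≤ ρ * B ^ 2) :
    ((∑ ε : Fin N → Bool,
        ‖∑ u : Fin N, (if ε u then (1 : ℝ) else -1) • ∑ i : Fin m, z u i‖)
      / (2 : ℝ) ^ N ≤ Real.sqrt ((N : ℝ) * m * B ^ 2 * (1 + ((m : ℝ) - 1) * ρ))) ∧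
    ((W / ((m : ℝ) * N)) *
        ((∑ ε : Fin N → Bool,
            ‖∑ u : Fin N, (if ε u then (1 : ℝ) else -1) • ∑ i : Fin m, z u i‖)
          / (2 : ℝ) ^ N)
      ≤ (W * B / Real.sqrt ((m : ℝ) * N)) * Real.sqrt (1 + ((m : ℝ) - 1) * ρ)) := by
  set Z : Fin N → EuclideanSpace ℝ (Fin d) := fun u => ∑ i : Fin m, z u i with hZdef
  have hif : ∀ b : Bool, (if b then (1:ℝ) else -1) = rsg b := fun b => rfl
  set c : ℝ := 1 + ((m:ℝ) - 1) * ρ with hcdef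
  -- per user bound
  have hZ : ∀ u, ‖Z u‖ ^ 2 ≤ (m:ℝ) * B ^ 2 * c := by
    intro u
    have e1 : ‖Z u‖ ^ 2 = ∑ i : Fin m, ∑ j : Fin m, (inner ℝ (z u i) (z u j) : ℝ) := by
      rw [← real_inner_self_eq_norm_sq, hZdef, sum_inner]
      exact Finset.sum_congr rfl fun i _ => inner_sum _ _ _
    have e2 : ∀ i : Fin m, ∑ j : Fin m, (inner ℝ (z u i) (z u j) : ℝ)
        = ‖z u i‖ ^ 2 + ∑ j ∈ Finset.univ.filter (fun j => j ≠ i),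
            (inner ℝ (z u i) (z u j) : ℝ) := by
      intro i
      rw [← Finset.sum_filter_add_sum_filter_not Finset.univ (fun j => j = i)]
      congr 1
      · rw [Finset.filter_eq', if_pos (Finset.mem_univ i), Finset.sum_singleton,
          real_inner_self_eq_norm_sq]
    have h1 : ∑ i : Fin m, ‖z u i‖ ^ 2 ≤ (m:ℝ) * B ^ 2 := by
      calc ∑ i : Fin m, ‖z u i‖ ^ 2 ≤ ∑ _i : Fin m, B ^ 2 :=
            Finset.sum_le_sum fun i _ => pow_le_pow_left₀ (norm_nonneg _) (hz u i) 2
        _ = (m:ℝ) * B ^ 2 := by simp [Finset.sum_const, Finset.card_univ, nsmul_eq_mul]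
    have h2 : ∑ i : Fin m, ∑ j ∈ Finset.univ.filter (fun j => j ≠ i),
        (inner ℝ (z u i) (z u j) : ℝ) ≤ (m:ℝ) * ((m:ℝ) - 1) * ρ * B ^ 2 := by
      by_cases hm2 : 2 ≤ m
      · have hc2 : (0:ℝ) < (m:ℝ) * ((m:ℝ) - 1) := by
          have : (2:ℝ) ≤ (m:ℝ) := by exact_mod_cast hm2
          nlinarith
        have := hcorr u
        rw [one_div, inv_mul_le_iff₀ hc2] at this
        nlinarith [this]
      · have hO : ∑ i : Fin m, ∑ j ∈ Finset.univ.filter (fun j => j ≠ i),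
            (inner ℝ (z u i) (z u j) : ℝ) = 0 := by
          apply Finset.sum_eq_zero
          intro i _
          apply Finset.sum_eq_zero
          intro j hj
          rw [Finset.mem_filter] at hj
          exact absurd (Fin.ext (by omega)) hj.2
        rw [hO]
        have hm01 : m = 0 ∨ m = 1 := by omega
        rcases hm01 with h | h <;> simp [h]
    calc ‖Z u‖ ^ 2 = ∑ i : Fin m, ‖z u i‖ ^ 2 + ∑ i : Fin m,
            ∑ j ∈ Finset.univ.filter (fun j => j ≠ i), (inner ℝ (z u i) (z u j) : ℝ) := by
          rw [e1, Finset.sum_congr rfl (fun i _ => e2 i), Finset.sum_add_distrib]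
      _ ≤ (m:ℝ) * B ^ 2 + (m:ℝ) * ((m:ℝ) - 1) * ρ * B ^ 2 := add_le_add h1 h2
      _ = (m:ℝ) * B ^ 2 * c := by rw [hcdef]; ring
  have hsum : ∑ u : Fin N, ‖Z u‖ ^ 2 ≤ (N:ℝ) * ((m:ℝ) * B ^ 2 * c) := by
    calc ∑ u : Fin N, ‖Z u‖ ^ 2 ≤ ∑ _u : Fin N, (m:ℝ) * B ^ 2 * c :=
          Finset.sum_le_sum fun u _ => hZ u
      _ = (N:ℝ) * ((m:ℝ) * B ^ 2 * c) := by
          simp [Finset.sum_const, Finset.card_univ, nsmul_eq_mul]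
  set T : ℝ := ∑ ε : Fin N → Bool, ‖∑ u : Fin N, rsg (ε u) • Z u‖ with hTdef
  have hgoalT : (∑ ε : Fin N → Bool,
      ‖∑ u : Fin N, (if ε u then (1 : ℝ) else -1) • ∑ i : Fin m, z u i‖) = T := by
    rw [hTdef]
    exact Finset.sum_congr rfl fun ε _ => by simp only [hif, hZdef]
  have h2N : (0:ℝ) < 2 ^ N := by positivity
  have hT0 : 0 ≤ T := Finset.sum_nonneg fun ε _ => norm_nonneg _
  have hchb : T ^ 2 ≤ 2 ^ N * ∑ ε : Fin N → Bool, ‖∑ u : Fin N, rsg (ε u) • Z u‖ ^ 2 := by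
    have := sq_sum_le_card_mul_sum_sq (s := (Finset.univ : Finset (Fin N → Bool)))
      (f := fun ε => ‖∑ u : Fin N, rsg (ε u) • Z u‖)
    have hcard : (((Finset.univ : Finset (Fin N → Bool)).card : ℕ) : ℝ) = 2 ^ N := by
      rw [Finset.card_univ]
      simp [Fintype.card_fun]
    rw [hcard] at this
    exact this
  have hTsq : T ^ 2 ≤ 2 ^ N * (2 ^ N * ((N:ℝ) * ((m:ℝ) * B ^ 2 * c))) := by
    rw [rsg_exp_sq Z] at hchb
    refine hchb.trans ?_
    have := mul_le_mul_of_nonneg_left hsum h2N.le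
    exact mul_le_mul_of_nonneg_left this h2N.le
  have part1 : T / 2 ^ N ≤ Real.sqrt ((N:ℝ) * m * B ^ 2 * c) := by
    apply Real.le_sqrt_of_sq_le
    rw [div_pow, div_le_iff₀ (by positivity)]
    calc T ^ 2 ≤ 2 ^ N * (2 ^ N * ((N:ℝ) * ((m:ℝ) * B ^ 2 * c))) := hTsq
      _ = (N:ℝ) * m * B ^ 2 * c * ((2:ℝ) ^ N) ^ 2 := by ring
  constructor
  · rw [hgoalT]; exact part1
  · rw [hgoalT]
    by_cases hmn : (m:ℝ) * N = 0
    · rw [hmn, div_zero, zero_mul, Real.sqrt_zero, div_zero, zero_mul]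
    · have hmn' : 0 < (m:ℝ) * N := lt_of_le_of_ne (by positivity) (Ne.symm hmn)
      have hm0 : m ≠ 0 := by
        intro h; apply hmn; rw [h]; simp
      have hN0 : N ≠ 0 := by
        intro h; apply hmn; rw [h]; simp
      have hB : 0 ≤ B :=
        le_trans (norm_nonneg _) (hz ⟨0, Nat.pos_of_ne_zero hN0⟩ ⟨0, Nat.pos_of_ne_zero hm0⟩)
      have hm1 : (1:ℝ) ≤ (m:ℝ) := by exact_mod_cast Nat.one_le_iff_ne_zero.2 hm0
      have hc0 : 0 ≤ c := by
        have : 0 ≤ ((m:ℝ) - 1) * ρ := mul_nonneg (by linarith) hρ0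
        rw [hcdef]; linarith
      have hs : 0 < Real.sqrt ((m:ℝ) * N) := Real.sqrt_pos.2 hmn'
      have hsqrtQ : Real.sqrt ((N:ℝ) * m * B ^ 2 * c)
          = Real.sqrt ((m:ℝ) * N) * (B * Real.sqrt c) := by
        rw [show (N:ℝ) * m * B ^ 2 * c = ((m:ℝ) * N) * (B ^ 2 * c) by ring,
          Real.sqrt_mul hmn'.le, Real.sqrt_mul (sq_nonneg B), Real.sqrt_sq hB]
      calc W / ((m:ℝ) * N) * (T / 2 ^ N)
          ≤ W / ((m:ℝ) * N) * Real.sqrt ((N:ℝ) * m * B ^ 2 * c) :=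
            mul_le_mul_of_nonneg_left part1 (by positivity)
        _ = (W * B / Real.sqrt ((m:ℝ) * N)) * Real.sqrt c := by
            rw [hsqrtQ, ← Real.mul_self_sqrt hmn'.le]
            field_simp
            rw [Real.sqrt_sq (Real.sqrt_nonneg _)]
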